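/- The Pitman–Stanley polynomial P_n(x) = Σ_{a ∈ park(n)} x_{a_1}···x_{a_n} equals the number of x-parking functions of length n when x = (x_1,...,x_n) ∈ ℕ^n with all x_i positive: that is, the number of sequences (c_1,...,c_n) of positive integers whose nondecreasing rearrangement satisfies c_{(i)} ≤ x_1+...+x_i equals Σ_{a ∈ park(n)} x_{a_1}···x_{a_n}. -/

import Mathlib

open Finset
open scoped Classical

/-- `c` rearranges nondecreasingly so that the `i`-th order statistic is at most `u i`. -/
def SortedLE {n : ℕ} (c u : Fin n → ℕ) : Prop :=
  ∃ σ : Equiv.Perm (Fin n),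
    (∀ i j : Fin n, i ≤ j → c (σ i) ≤ c (σ j)) ∧ ∀ i, c (σ i) ≤ u i

/-- Classical parking functions of length `n`, 0-indexed: functions `c : Fin n → Fin n`
whose nondecreasing rearrangement satisfies `c_(i) ≤ i`. -/
noncomputable def park (n : ℕ) : Finset (Fin n → Fin n) :=
  Finset.univ.filter (fun c => ∃ σ : Equiv.Perm (Fin n),
    (∀ i j : Fin n, i ≤ j → c (σ i) ≤ c (σ j)) ∧ ∀ i, (c (σ i) : ℕ) ≤ (i : ℕ))

namespace PSAux

variable {n : ℕ}

/-- partial sum up to and including `i` -/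
noncomputable def pS (x : Fin n → ℕ) (i : Fin n) : ℕ :=
  ∑ j ∈ Finset.univ.filter (· ≤ i), x j

/-- partial sum strictly below `i` -/
noncomputable def pS' (x : Fin n → ℕ) (i : Fin n) : ℕ :=
  ∑ j ∈ Finset.univ.filter (· < i), x j

lemma pS_eq (x : Fin n → ℕ) (i : Fin n) : pS x i = pS' x i + x i := by
  unfold pS pS'
  rw [show Finset.univ.filter (· ≤ i) = insert i (Finset.univ.filter (· < i)) by
    ext j; simp [le_iff_lt_or_eq, or_comm]]
  rw [Finset.sum_insert (by simp)]
  ring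

lemma pS'_mono (x : Fin n → ℕ) {i j : Fin n} (h : i ≤ j) : pS' x i ≤ pS' x j :=
  Finset.sum_le_sum_of_subset (by intro k; simp only [mem_filter]; exact fun ⟨_, hk⟩ => ⟨by simp, lt_of_lt_of_le hk h⟩)

lemma pS_mono (x : Fin n → ℕ) {i j : Fin n} (h : i ≤ j) : pS x i ≤ pS x j :=
  Finset.sum_le_sum_of_subset (by intro k; simp only [mem_filter]; exact fun ⟨_, hk⟩ => ⟨by simp, le_trans hk h⟩)

lemma pS_le_pS' (x : Fin n → ℕ) {i j : Fin n} (h : i < j) : pS x i ≤ pS' x j :=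
  Finset.sum_le_sum_of_subset (by intro k; simp only [mem_filter]; exact fun ⟨_, hk⟩ => ⟨by simp, lt_of_le_of_lt hk h⟩)

/-- block of a value -/
noncomputable def blk (hn : 0 < n) (x : Fin n → ℕ) (v : ℕ) : Fin n :=
  if h : (Finset.univ.filter (fun k => v ≤ pS x k)).Nonempty then
    (Finset.univ.filter (fun k => v ≤ pS x k)).min' h else ⟨0, hn⟩

lemma blk_le (hn : 0 < n) (x : Fin n → ℕ) {v : ℕ} {k : Fin n} (hk : v ≤ pS x k) :
    blk hn x v ≤ k := by
  have h : (Finset.univ.filter (fun k => v ≤ pS x k)).Nonempty := ⟨k, by simp [hk]⟩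
  rw [blk, dif_pos h]
  exact Finset.min'_le _ _ (by simp [hk])

lemma le_pS_blk (hn : 0 < n) (x : Fin n → ℕ) {v : ℕ} (hex : ∃ k, v ≤ pS x k) :
    v ≤ pS x (blk hn x v) := by
  obtain ⟨k, hk⟩ := hex
  have h : (Finset.univ.filter (fun k => v ≤ pS x k)).Nonempty := ⟨k, by simp [hk]⟩
  rw [blk, dif_pos h]
  have := Finset.min'_mem _ h
  simpa using this

lemma pS'_lt_blk (hn : 0 < n) (x : Fin n → ℕ) {v : ℕ} (hv : 1 ≤ v) (hex : ∃ k, v ≤ pS x k) :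
    pS' x (blk hn x v) < v := by
  by_contra h
  push_neg at h
  set b := blk hn x v with hb
  have hb0 : 0 < (b : ℕ) := by
    rcases Nat.eq_zero_or_pos (b : ℕ) with h0 | h0
    · exfalso
      have : pS' x b = 0 := by
        unfold pS'
        rw [show Finset.univ.filter (· < b) = ∅ by
          ext k; simp only [mem_filter, mem_univ, true_and, Finset.notMem_empty, iff_false]
          intro hk; rw [Fin.lt_def, h0] at hk; omega]
        simp
      omega
    · exact h0
  set k' : Fin n := ⟨(b : ℕ) - 1, by omega⟩ with hk'
  have hps : pS x k' = pS' x b := by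
    unfold pS pS'
    congr 1
    ext j
    simp only [mem_filter, mem_univ, true_and, Fin.le_def, Fin.lt_def, Fin.val_mk]
    have hg : ((⟨(b : ℕ) - 1, by omega⟩ : Fin n) : ℕ) = (blk hn x v : ℕ) - 1 := rfl
    omega
  have hle : blk hn x v ≤ k' := blk_le hn x (v := v) (by rw [hps]; exact h)
  rw [← hb] at hle
  rw [Fin.le_def] at hle
  simp only [hk'] at hle
  omega

lemma blk_mono (hn : 0 < n) (x : Fin n → ℕ) {v w : ℕ} (hvw : v ≤ w)
    (hex : ∃ k, w ≤ pS x k) : blk hn x v ≤ blk hn x w :=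
  blk_le hn x (le_trans hvw (le_pS_blk hn x hex))

lemma blk_recover (hn : 0 < n) (x : Fin n → ℕ) (k : Fin n) {b : ℕ} (hb : b < x k) :
    blk hn x (pS' x k + b + 1) = k := by
  set v := pS' x k + b + 1 with hv
  have h1 : v ≤ pS x k := by rw [pS_eq]; omega
  have h2 : blk hn x v ≤ k := blk_le hn x h1
  rcases lt_or_eq_of_le h2 with h3 | h3
  · exfalso
    have := le_pS_blk hn x (v := v) ⟨k, h1⟩
    have := pS_le_pS' x h3
    omega
  · exact h3



lemma hex_of_sorted (hn : 0 < n) (x : Fin n → ℕ) {c : Fin n → ℕ}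
    (hs : SortedLE c (pS x)) (i : Fin n) : ∃ k, c i ≤ pS x k := by
  obtain ⟨σ, -, hσ⟩ := hs
  exact ⟨σ.symm i, by simpa using hσ (σ.symm i)⟩

lemma mem_park (hn : 0 < n) (x : Fin n → ℕ) {c : Fin n → ℕ}
    (hpos : ∀ i, 1 ≤ c i) (hs : SortedLE c (pS x)) :
    (fun i => blk hn x (c i)) ∈ park n := by
  have hex := hex_of_sorted hn x hs
  obtain ⟨σ, hmono, hσ⟩ := hs
  rw [park, mem_filter]
  refine ⟨mem_univ _, σ, fun i j hij => blk_mono hn x (hmono i j hij) (hex (σ j)), fun i => ?_⟩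
  by_contra hlt
  push_neg at hlt
  have h1 : pS x i ≤ pS' x (blk hn x (c (σ i))) :=
    pS_le_pS' x (by rw [Fin.lt_def]; exact hlt)
  have h2 : pS' x (blk hn x (c (σ i))) < c (σ i) :=
    pS'_lt_blk hn x (hpos _) (hex _)
  have h3 := hσ i
  omega

lemma sortedLE_of (hn : 0 < n) (x : Fin n → ℕ) {a : Fin n → Fin n} (ha : a ∈ park n)
    {b : Fin n → ℕ} (hb : ∀ i, b i < x (a i)) :
    SortedLE (fun i => pS' x (a i) + b i + 1) (pS x) := by
  set c : Fin n → ℕ := fun i => pS' x (a i) + b i + 1 with hc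
  have hrec : ∀ i, blk hn x (c i) = a i := fun i => blk_recover hn x (a i) (hb i)
  have hcle : ∀ i, c i ≤ pS x (a i) := fun i => by rw [pS_eq]; have := hb i; simp [hc]; omega
  set ρ := Tuple.sort c with hρ
  have hmonoc : Monotone (c ∘ ρ) := Tuple.monotone_sort c
  have hmonoa : Monotone (a ∘ ρ) := by
    intro i j hij
    have := hmonoc hij
    simp only [Function.comp] at this ⊢
    rw [← hrec (ρ i), ← hrec (ρ j)]
    exact blk_mono hn x this ⟨a (ρ j), hcle _⟩
  rw [park, mem_filter] at ha
  obtain ⟨-, σ, hmσ, hσ⟩ := ha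
  have hmonoaσ : Monotone (a ∘ σ) := fun i j hij => hmσ i j hij
  have huniq : a ∘ ρ = a ∘ σ := Tuple.unique_monotone hmonoa hmonoaσ
  refine ⟨ρ, fun i j hij => hmonoc hij, fun i => ?_⟩
  have h1 : (a (ρ i) : ℕ) ≤ (i : ℕ) := by
    have := congrFun huniq i
    simp only [Function.comp] at this
    rw [this]; exact hσ i
  calc c (ρ i) ≤ pS x (a (ρ i)) := hcle _
    _ ≤ pS x i := pS_mono x (by rw [Fin.le_def]; exact h1)

end PSAux

open PSAux


/-- The Pitman–Stanley polynomial evaluated at a positive integer vector `x` counts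
the `x`-parking functions: positive integer sequences whose `i`-th order statistic
is at most `x_1 + ⋯ + x_i`. -/
theorem pitman_stanley_counts_x_parking (n : ℕ) (hn : 0 < n)
    (x : Fin n → ℕ) (hx : ∀ i, 1 ≤ x i) :
    Nat.card {c : Fin n → ℕ //
        (∀ i, 1 ≤ c i) ∧
          SortedLE c (fun i => ∑ j ∈ Finset.univ.filter (· ≤ i), x j)} =
      ∑ a ∈ park n, ∏ i, x (a i) := by
  have hu : (fun i => ∑ j ∈ Finset.univ.filter (· ≤ i), x j) = pS x := rfl
  set A := {c : Fin n → ℕ // (∀ i, 1 ≤ c i) ∧ SortedLE c (pS x)} with hA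
  set T := Σ a : {a : Fin n → Fin n // a ∈ park n}, ∀ i : Fin n, Fin (x (a.1 i)) with hT
  let f : T → A := fun p =>
    ⟨fun i => pS' x (p.1.1 i) + (p.2 i : ℕ) + 1,
      fun i => Nat.le_add_left 1 _,
      sortedLE_of hn x p.1.2 (fun i => (p.2 i).2)⟩
  have hbij : Function.Bijective f := by
    constructor
    · rintro ⟨⟨a, ha⟩, b⟩ ⟨⟨a', ha'⟩, b'⟩ h
      have hv : ∀ i, pS' x (a i) + (b i : ℕ) + 1 = pS' x (a' i) + (b' i : ℕ) + 1 :=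
        fun i => congrFun (congrArg Subtype.val h) i
      have haa : a = a' := by
        funext i
        have h1 := blk_recover hn x (a i) (b i).2
        have h2 := blk_recover hn x (a' i) (b' i).2
        rw [← h1, ← h2, hv i]
      subst haa
      have hbb : b = b' := by
        funext i
        have := hv i
        exact Fin.ext (by omega)
      subst hbb
      rfl
    · rintro ⟨c, hpos, hs⟩
      have hex := hex_of_sorted hn x hs
      have hoff : ∀ i, c i - pS' x (blk hn x (c i)) - 1 < x (blk hn x (c i)) := by
        intro i
        have h1 := pS'_lt_blk hn x (hpos i) (hex i)
        have h2 := le_pS_blk hn x (hex i)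
        rw [pS_eq] at h2
        omega
      refine ⟨⟨⟨fun i => blk hn x (c i), mem_park hn x hpos hs⟩,
        fun i => ⟨c i - pS' x (blk hn x (c i)) - 1, hoff i⟩⟩, ?_⟩
      apply Subtype.ext
      funext i
      show pS' x (blk hn x (c i)) + (c i - pS' x (blk hn x (c i)) - 1) + 1 = c i
      have := pS'_lt_blk hn x (hpos i) (hex i)
      omega
  rw [hu]
  rw [← Nat.card_eq_of_bijective f hbij]
  rw [Nat.card_eq_fintype_card, Fintype.card_sigma]
  rw [← Finset.sum_coe_sort (park n) (fun a => ∏ i, x (a i))]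
  exact Finset.sum_congr rfl fun a _ => by simp [Fintype.card_pi]
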